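/- Let g₂, g₃, c₀, c₁ ∈ ℝ, let n ≥ 0 be a natural number, let B ∈ ℝ[X] be a monic polynomial of degree n, and set C := c₁·X + c₀. If the odd-case Lamé symmetry identity (4X³ − g₂X − g₃)²·B''' + 3(4X³ − g₂X − g₃)(12X² − g₂)·B'' + (4(4X³ − g₂X − g₃)·C + 300X⁴ − 66g₂X² − 48g₃X + (3/4)g₂²)·B' + 2B·((12X² − g₂)·C + 60X³ − 9g₂X − 6g₃) + 2B·C'·(4X³ − g₂X − g₃) = 0 holds in ℝ[X], then c₁ = −15/4 − n(n+4). -/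

import Mathlib

open Polynomial

private lemma two_mul_coeff (B : Polynomial ℝ) (k : ℕ) :
    (2 * B).coeff k = 2 * B.coeff k := by
  rw [show (2 : Polynomial ℝ) = Polynomial.C 2 from (map_ofNat Polynomial.C 2).symm,
    coeff_C_mul]

/-- In the odd Lamé case with `C = c₁X + c₀` and `B` monic of degree `n`, the symmetry
identity forces `c₁ = −15/4 − n(n+4)`. -/
theorem odd_lame_leading_coefficient
    (g₂ g₃ c₀ c₁ : ℝ) (n : ℕ)
    (B : Polynomial ℝ) (hB : B.Monic) (hdeg : B.natDegree = n)
    (h : (4 * X ^ 3 - Polynomial.C g₂ * X - Polynomial.C g₃) ^ 2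
          * derivative (derivative (derivative B))
        + 3 * (4 * X ^ 3 - Polynomial.C g₂ * X - Polynomial.C g₃)
            * (12 * X ^ 2 - Polynomial.C g₂) * derivative (derivative B)
        + (4 * (4 * X ^ 3 - Polynomial.C g₂ * X - Polynomial.C g₃)
              * (Polynomial.C c₁ * X + Polynomial.C c₀)
            + 300 * X ^ 4 - Polynomial.C (66 * g₂) * X ^ 2
            - Polynomial.C (48 * g₃) * X + Polynomial.C (3 / 4 * g₂ ^ 2))
            * derivative B
        + 2 * B * ((12 * X ^ 2 - Polynomial.C g₂)
              * (Polynomial.C c₁ * X + Polynomial.C c₀)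
            + 60 * X ^ 3 - Polynomial.C (9 * g₂) * X - Polynomial.C (6 * g₃))
        + 2 * B * derivative (Polynomial.C c₁ * X + Polynomial.C c₀)
            * (4 * X ^ 3 - Polynomial.C g₂ * X - Polynomial.C g₃) = 0) :
    c₁ = -15 / 4 - (n : ℝ) * (n + 4) := by
  -- simplify the derivative of C
  rw [show derivative (Polynomial.C c₁ * X + Polynomial.C c₀) = Polynomial.C c₁ by simp] at h
  -- basic degree/coefficient facts
  have hBn : B.coeff n = 1 := by rw [← hdeg]; exact hB.coeff_natDegree
  have hBle : B.natDegree ≤ n := hdeg.le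
  have hPdeg : (4 * X ^ 3 - Polynomial.C g₂ * X - Polynomial.C g₃ : Polynomial ℝ).natDegree ≤ 3 := by
    compute_degree
  have hP3 : (4 * X ^ 3 - Polynomial.C g₂ * X - Polynomial.C g₃ : Polynomial ℝ).coeff 3 = 4 := by
    compute_degree <;> simp
  have hMdeg : ((12 * X ^ 2 - Polynomial.C g₂) * (Polynomial.C c₁ * X + Polynomial.C c₀)
      + 60 * X ^ 3 - Polynomial.C (9 * g₂) * X - Polynomial.C (6 * g₃) : Polynomial ℝ).natDegree ≤ 3 := by
    compute_degree
  have hM3 : ((12 * X ^ 2 - Polynomial.C g₂) * (Polynomial.C c₁ * X + Polynomial.C c₀)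
      + 60 * X ^ 3 - Polynomial.C (9 * g₂) * X - Polynomial.C (6 * g₃) : Polynomial ℝ).coeff 3
      = 12 * c₁ + 60 := by
    compute_degree <;> simp
  have hAdeg : (4 * (4 * X ^ 3 - Polynomial.C g₂ * X - Polynomial.C g₃)
      * (Polynomial.C c₁ * X + Polynomial.C c₀)
      + 300 * X ^ 4 - Polynomial.C (66 * g₂) * X ^ 2
      - Polynomial.C (48 * g₃) * X + Polynomial.C (3 / 4 * g₂ ^ 2) : Polynomial ℝ).natDegree ≤ 4 := by
    compute_degree
  have hA4 : (4 * (4 * X ^ 3 - Polynomial.C g₂ * X - Polynomial.C g₃)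
      * (Polynomial.C c₁ * X + Polynomial.C c₀)
      + 300 * X ^ 4 - Polynomial.C (66 * g₂) * X ^ 2
      - Polynomial.C (48 * g₃) * X + Polynomial.C (3 / 4 * g₂ ^ 2) : Polynomial ℝ).coeff 4
      = 16 * c₁ + 300 := by
    compute_degree <;> simp
  have hPQdeg : (3 * (4 * X ^ 3 - Polynomial.C g₂ * X - Polynomial.C g₃)
      * (12 * X ^ 2 - Polynomial.C g₂) : Polynomial ℝ).natDegree ≤ 5 := by
    compute_degree
  have hPQ5 : (3 * (4 * X ^ 3 - Polynomial.C g₂ * X - Polynomial.C g₃)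
      * (12 * X ^ 2 - Polynomial.C g₂) : Polynomial ℝ).coeff 5 = 144 := by
    compute_degree <;> simp
  have hP2deg : ((4 * X ^ 3 - Polynomial.C g₂ * X - Polynomial.C g₃ : Polynomial ℝ) ^ 2).natDegree ≤ 6 := by
    compute_degree
  have hP26 : ((4 * X ^ 3 - Polynomial.C g₂ * X - Polynomial.C g₃ : Polynomial ℝ) ^ 2).coeff 6 = 16 := by
    compute_degree <;> simp
  have h2Bdeg : (2 * B).natDegree ≤ n :=
    natDegree_mul_le.trans (by simpa using hBle)
  have h2BCdeg : (2 * B * Polynomial.C c₁).natDegree ≤ n :=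
    natDegree_mul_le.trans (by simpa [natDegree_C] using h2Bdeg)
  have hd1 : (derivative B).natDegree ≤ n - 1 := by
    have := natDegree_derivative_le B; omega
  have hd2 : (derivative (derivative B)).natDegree ≤ n - 2 := by
    have := natDegree_derivative_le (derivative B); omega
  have hd3 : (derivative (derivative (derivative B))).natDegree ≤ n - 3 := by
    have := natDegree_derivative_le (derivative (derivative B)); omega
  -- take the coefficient of degree n+3
  have hc := congrArg (fun p : Polynomial ℝ => p.coeff (n + 3)) h
  simp only [coeff_add, coeff_zero] at hc
  -- term 4
  have e4 : (2 * B * ((12 * X ^ 2 - Polynomial.C g₂)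
      * (Polynomial.C c₁ * X + Polynomial.C c₀)
      + 60 * X ^ 3 - Polynomial.C (9 * g₂) * X - Polynomial.C (6 * g₃))).coeff (n + 3)
      = 2 * (12 * c₁ + 60) := by
    rw [coeff_mul_add_eq_of_natDegree_le h2Bdeg hMdeg, two_mul_coeff, hBn, hM3]; ring
  -- term 5
  have e5 : (2 * B * Polynomial.C c₁
      * (4 * X ^ 3 - Polynomial.C g₂ * X - Polynomial.C g₃)).coeff (n + 3) = 8 * c₁ := by
    rw [coeff_mul_add_eq_of_natDegree_le h2BCdeg hPdeg, coeff_mul_C, two_mul_coeff, hBn, hP3]; ring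
  rw [e4, e5] at hc
  rcases n with _ | _ | _ | m
  · -- n = 0
    have hB1 : B = 1 := hB.natDegree_eq_zero.mp hdeg
    rw [hB1] at hc
    simp only [derivative_one, map_zero, mul_zero, coeff_zero] at hc
    norm_num
    linarith
  · -- n = 1
    have hd2' : derivative (derivative B) = 0 :=
      derivative_of_natDegree_zero (by omega)
    have e3 : ((4 * (4 * X ^ 3 - Polynomial.C g₂ * X - Polynomial.C g₃)
        * (Polynomial.C c₁ * X + Polynomial.C c₀)
        + 300 * X ^ 4 - Polynomial.C (66 * g₂) * X ^ 2
        - Polynomial.C (48 * g₃) * X + Polynomial.C (3 / 4 * g₂ ^ 2))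
        * derivative B).coeff (1 + 3) = (16 * c₁ + 300) * 1 := by
      rw [show (1 + 3 : ℕ) = 4 + 0 from rfl,
        coeff_mul_add_eq_of_natDegree_le hAdeg (by omega), hA4, coeff_derivative]
      have : B.coeff (0 + 1) = 1 := hBn
      rw [this]; norm_num
    rw [hd2', e3] at hc
    simp only [map_zero, mul_zero, zero_add, coeff_zero] at hc
    norm_num
    linarith
  · -- n = 2
    have hd3' : derivative (derivative (derivative B)) = 0 :=
      derivative_of_natDegree_zero (by omega)
    have e2 : (3 * (4 * X ^ 3 - Polynomial.C g₂ * X - Polynomial.C g₃)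
        * (12 * X ^ 2 - Polynomial.C g₂) * derivative (derivative B)).coeff (2 + 3)
        = 144 * 2 := by
      rw [show (2 + 3 : ℕ) = 5 + 0 from rfl,
        coeff_mul_add_eq_of_natDegree_le hPQdeg (by omega), hPQ5, coeff_derivative, coeff_derivative]
      have : B.coeff (0 + 1 + 1) = 1 := hBn
      rw [this]; norm_num
    have e3 : ((4 * (4 * X ^ 3 - Polynomial.C g₂ * X - Polynomial.C g₃)
        * (Polynomial.C c₁ * X + Polynomial.C c₀)
        + 300 * X ^ 4 - Polynomial.C (66 * g₂) * X ^ 2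
        - Polynomial.C (48 * g₃) * X + Polynomial.C (3 / 4 * g₂ ^ 2))
        * derivative B).coeff (2 + 3) = (16 * c₁ + 300) * 2 := by
      rw [show (2 + 3 : ℕ) = 4 + 1 from rfl,
        coeff_mul_add_eq_of_natDegree_le hAdeg (by omega), hA4, coeff_derivative]
      have : B.coeff (1 + 1) = 1 := hBn
      rw [this]; norm_num
    rw [hd3', e2, e3] at hc
    simp only [mul_zero, coeff_zero] at hc
    norm_num
    linarith
  · -- n = m + 3
    have e1 : ((4 * X ^ 3 - Polynomial.C g₂ * X - Polynomial.C g₃) ^ 2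
        * derivative (derivative (derivative B))).coeff (m + 3 + 3)
        = 16 * (((m : ℝ) + 1) * ((m : ℝ) + 2) * ((m : ℝ) + 3)) := by
      rw [show m + 3 + 3 = 6 + m from by omega,
        coeff_mul_add_eq_of_natDegree_le hP2deg (by omega), hP26,
        coeff_derivative, coeff_derivative, coeff_derivative]
      have : B.coeff (m + 1 + 1 + 1) = 1 := by rw [show m + 1 + 1 + 1 = m + 3 from by omega]; exact hBn
      rw [this]; push_cast; ring
    have e2 : (3 * (4 * X ^ 3 - Polynomial.C g₂ * X - Polynomial.C g₃)
        * (12 * X ^ 2 - Polynomial.C g₂) * derivative (derivative B)).coeff (m + 3 + 3)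
        = 144 * (((m : ℝ) + 2) * ((m : ℝ) + 3)) := by
      rw [show m + 3 + 3 = 5 + (m + 1) from by omega,
        coeff_mul_add_eq_of_natDegree_le hPQdeg (by omega), hPQ5,
        coeff_derivative, coeff_derivative]
      have : B.coeff (m + 1 + 1 + 1) = 1 := by rw [show m + 1 + 1 + 1 = m + 3 from by omega]; exact hBn
      rw [this]; push_cast; ring
    have e3 : ((4 * (4 * X ^ 3 - Polynomial.C g₂ * X - Polynomial.C g₃)
        * (Polynomial.C c₁ * X + Polynomial.C c₀)
        + 300 * X ^ 4 - Polynomial.C (66 * g₂) * X ^ 2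
        - Polynomial.C (48 * g₃) * X + Polynomial.C (3 / 4 * g₂ ^ 2))
        * derivative B).coeff (m + 3 + 3) = (16 * c₁ + 300) * ((m : ℝ) + 3) := by
      rw [show m + 3 + 3 = 4 + (m + 2) from by omega,
        coeff_mul_add_eq_of_natDegree_le hAdeg (by omega), hA4, coeff_derivative]
      have : B.coeff (m + 2 + 1) = 1 := by rw [show m + 2 + 1 = m + 3 from by omega]; exact hBn
      rw [this]; push_cast; ring
    rw [e1, e2, e3] at hc
    have key : (16 * (m : ℝ) + 80) * (c₁ + 15 / 4 + ((m : ℝ) + 3) * ((m : ℝ) + 7)) = 0 := by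
      linear_combination hc
    have h80 : (16 * (m : ℝ) + 80) ≠ 0 := by positivity
    have hfin := (mul_eq_zero.mp key).resolve_left h80
    push_cast
    linear_combination hfin
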